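/- Let r_n be an extreme space scale and let β > β_c, α = β_c/β. Then there exist a constant 0 < C < ∞ and n₀ such that for all n ≥ n₀ and all u with 1 ≤ u ≤ b_n(1 - Φ(1/(β√n))), one has g_n(u) ≤ C·u^{-1/α}. -/

import Mathlib

open Filter MeasureTheory

/-- The standard Gaussian density `φ(x) = (2π)^{-1/2} e^{-x²/2}`. -/
noncomputable def phi (x : ℝ) : ℝ := (Real.sqrt (2 * Real.pi))⁻¹ * Real.exp (-x ^ 2 / 2)

/-- The standard Gaussian distribution function `Φ(x) = ∫_{-∞}^x φ(y) dy`. -/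
noncomputable def Phi (x : ℝ) : ℝ := ∫ y in Set.Iic x, phi y

/-- `G_n^{-1}(u) = inf {v ≥ 0 : G_n(v) ≤ u}` where `G_n(v) = 1 - Φ(log v/(β√n))`. -/
noncomputable def Ginv (β : ℝ) (n : ℕ) (u : ℝ) : ℝ :=
  sInf {v : ℝ | 0 ≤ v ∧ 1 - Phi (Real.log v / (β * Real.sqrt n)) ≤ u}

section Aux

lemma phi_pos (x : ℝ) : 0 < phi x := by
  apply mul_pos (inv_pos.2 (Real.sqrt_pos.2 (by positivity))) (Real.exp_pos _)

lemma phi_eq (x : ℝ) : phi x = (Real.sqrt (2 * Real.pi))⁻¹ * Real.exp (-(2⁻¹ : ℝ) * x ^ 2) := by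
  unfold phi; ring_nf

lemma integrable_phi : Integrable phi := by
  have : Integrable (fun x : ℝ => Real.exp (-(2⁻¹:ℝ) * x ^ 2)) :=
    integrable_exp_neg_mul_sq (by norm_num)
  have h := this.const_mul (Real.sqrt (2 * Real.pi))⁻¹
  apply h.congr
  filter_upwards with x
  rw [phi_eq]

lemma integral_phi : ∫ x, phi x = 1 := by
  have h := integral_gaussian (2⁻¹ : ℝ)
  have : ∫ x, phi x = (Real.sqrt (2 * Real.pi))⁻¹ * ∫ x : ℝ, Real.exp (-(2⁻¹:ℝ) * x ^ 2) := by
    rw [← integral_const_mul]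
    congr 1; ext x; rw [phi_eq]
  rw [this, h]
  have : Real.pi / 2⁻¹ = 2 * Real.pi := by ring
  rw [this, inv_mul_cancel₀ (by positivity)]

lemma Phi_add_tail (x : ℝ) : Phi x + ∫ y in Set.Ioi x, phi y = 1 := by
  rw [Phi, intervalIntegral.integral_Iic_add_Ioi integrable_phi.integrableOn
    integrable_phi.integrableOn, integral_phi]

lemma tail_eq (x : ℝ) : ∫ y in Set.Ioi x, phi y = 1 - Phi x := by
  have := Phi_add_tail x; linarith

lemma integral_Ioc_phi_pos {c d : ℝ} (h : c < d) : 0 < ∫ y in Set.Ioc c d, phi y := by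
  rw [setIntegral_pos_iff_support_of_nonneg_ae]
  · have : Function.support phi = Set.univ := by
      ext x; simp [Function.mem_support, (phi_pos x).ne']
    rw [this, Set.univ_inter]
    simp [h]
  · filter_upwards with x using (phi_pos x).le
  · exact integrable_phi.integrableOn

lemma Phi_split {c d : ℝ} (h : c ≤ d) : Phi d = Phi c + ∫ y in Set.Ioc c d, phi y := by
  rw [Phi, Phi, ← Set.Iic_union_Ioc_eq_Iic h,
    setIntegral_union (Set.Iic_disjoint_Ioc le_rfl) measurableSet_Ioc
      integrable_phi.integrableOn integrable_phi.integrableOn]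

lemma Phi_strictMono : StrictMono Phi := by
  intro c d h
  have := integral_Ioc_phi_pos h
  rw [Phi_split h.le]; linarith

lemma Phi_pos (x : ℝ) : 0 < Phi x := by
  have h := integral_Ioc_phi_pos (show x - 1 < x by linarith)
  have h2 : 0 ≤ Phi (x - 1) := by
    apply setIntegral_nonneg measurableSet_Iic
    intro y _; exact (phi_pos y).le
  rw [Phi_split (show x - 1 ≤ x by linarith)]; linarith

lemma tail_pos (x : ℝ) : 0 < 1 - Phi x := by
  rw [← tail_eq]
  calc (0:ℝ) < ∫ y in Set.Ioc x (x+1), phi y := integral_Ioc_phi_pos (by linarith)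
  _ ≤ ∫ y in Set.Ioi x, phi y := by
      apply setIntegral_mono_set integrable_phi.integrableOn
      · filter_upwards with y using (phi_pos y).le
      · exact HasSubset.Subset.eventuallyLE Set.Ioc_subset_Ioi_self

lemma Phi_lt_one (x : ℝ) : Phi x < 1 := by have := tail_pos x; linarith

lemma tail_lt_one (x : ℝ) : 1 - Phi x < 1 := by have := Phi_pos x; linarith

lemma le_of_tail_le {a c : ℝ} (h : 1 - Phi a ≤ 1 - Phi c) : c ≤ a := by
  by_contra hc
  push_neg at hc
  have := Phi_strictMono hc
  linarith

lemma integrable_id_mul_phi : Integrable (fun y : ℝ => y * phi y) := by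
  have h := (integrable_rpow_mul_exp_neg_mul_sq (b := (2⁻¹:ℝ)) (by norm_num) (s := 1)
    (by norm_num)).const_mul (Real.sqrt (2 * Real.pi))⁻¹
  apply h.congr
  filter_upwards with y
  rw [phi_eq, Real.rpow_one]; ring

lemma hasDerivAt_neg_phi (y : ℝ) : HasDerivAt (fun z : ℝ => -phi z) (y * phi y) y := by
  have h1 : HasDerivAt (fun z : ℝ => -z ^ 2 / 2) (-y) y := by
    have := ((hasDerivAt_pow 2 y).neg).div_const 2
    simpa using this.congr_deriv (by ring)
  have h2 := ((h1.exp).const_mul ((Real.sqrt (2 * Real.pi))⁻¹)).neg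
  apply h2.congr_deriv
  unfold phi; ring

lemma tendsto_neg_phi : Tendsto (fun z : ℝ => -phi z) atTop (nhds 0) := by
  have h1 : Tendsto (fun z : ℝ => -z ^ 2 / 2) atTop atBot := by
    apply Tendsto.atBot_div_const (by norm_num : (0:ℝ) < 2)
    exact tendsto_neg_atBot_iff.2 (tendsto_pow_atTop (by norm_num))
  have h2 : Tendsto (fun z : ℝ => phi z) atTop (nhds 0) := by
    have := (Real.tendsto_exp_atBot.comp h1).const_mul ((Real.sqrt (2 * Real.pi))⁻¹)
    simpa [phi] using this
  simpa using h2.neg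

lemma integral_Ioi_mul_phi (x : ℝ) : ∫ y in Set.Ioi x, y * phi y = phi x := by
  have := integral_Ioi_of_hasDerivAt_of_tendsto' (a := x) (m := 0)
    (f := fun z : ℝ => -phi z) (f' := fun y : ℝ => y * phi y)
    (fun y _ => hasDerivAt_neg_phi y)
    integrable_id_mul_phi.integrableOn tendsto_neg_phi
  simpa using this

lemma tail_le (x : ℝ) (hx : 0 < x) : 1 - Phi x ≤ phi x / x := by
  rw [← tail_eq]
  have h : ∫ y in Set.Ioi x, phi y ≤ ∫ y in Set.Ioi x, x⁻¹ * (y * phi y) := by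
    apply setIntegral_mono_on integrable_phi.integrableOn
      ((integrable_id_mul_phi.const_mul x⁻¹).integrableOn) measurableSet_Ioi
    intro y hy
    rw [Set.mem_Ioi] at hy
    rw [inv_mul_eq_div, le_div_iff₀ hx]
    nlinarith [phi_pos y]
  rw [integral_const_mul, integral_Ioi_mul_phi] at h
  rw [div_eq_inv_mul]; exact h

lemma tail_ge (x : ℝ) (hx : 1 ≤ x) : Real.exp (-(3/2)) * (phi x / x) ≤ 1 - Phi x := by
  rw [← tail_eq]
  have hxpos : 0 < x := lt_of_lt_of_le one_pos hx
  have hinv : 0 < x⁻¹ := inv_pos.2 hxpos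
  have hinvle : x⁻¹ ≤ 1 := by rw [inv_le_one_iff₀]; right; exact hx
  have hxx : x * x⁻¹ = 1 := mul_inv_cancel₀ hxpos.ne'
  have h1 : ∫ y in Set.Ioc x (x + x⁻¹), phi y ≤ ∫ y in Set.Ioi x, phi y := by
    apply setIntegral_mono_set integrable_phi.integrableOn
    · filter_upwards with y using (phi_pos y).le
    · exact HasSubset.Subset.eventuallyLE Set.Ioc_subset_Ioi_self
  have h2 : phi (x + x⁻¹) * x⁻¹ ≤ ∫ y in Set.Ioc x (x + x⁻¹), phi y := by
    have hm : (volume (Set.Ioc x (x + x⁻¹))).toReal = x⁻¹ := by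
      rw [Real.volume_Ioc, ENNReal.toReal_ofReal (by linarith)]
      ring
    have := setIntegral_ge_of_const_le (s := Set.Ioc x (x + x⁻¹)) (c := phi (x + x⁻¹))
      measurableSet_Ioc
      (by rw [Real.volume_Ioc]; exact ENNReal.ofReal_ne_top)
      (fun y hy => by
        rw [Set.mem_Ioc] at hy
        rw [phi_eq, phi_eq]
        apply mul_le_mul_of_nonneg_left _ (by positivity)
        apply Real.exp_le_exp.2
        nlinarith [hy.1, hy.2])
      integrable_phi.integrableOn
    rw [measureReal_def, hm, smul_eq_mul] at this
    linarith
  have h3 : Real.exp (-(3/2)) * (phi x / x) ≤ phi (x + x⁻¹) * x⁻¹ := by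
    have hphile : Real.exp (-(3/2)) * phi x ≤ phi (x + x⁻¹) := by
      rw [phi_eq, phi_eq, mul_left_comm, ← Real.exp_add]
      apply mul_le_mul_of_nonneg_left _ (by positivity)
      apply Real.exp_le_exp.2
      nlinarith [sq_nonneg x⁻¹]
    calc Real.exp (-(3/2)) * (phi x / x) = (Real.exp (-(3/2)) * phi x) * x⁻¹ := by
          rw [div_eq_mul_inv]; ring
    _ ≤ phi (x + x⁻¹) * x⁻¹ := mul_le_mul_of_nonneg_right hphile hinv.le
  linarith

lemma ev_nat (c : ℝ) : ∀ᶠ n : ℕ in atTop, c ≤ (n : ℝ) := by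
  filter_upwards [eventually_ge_atTop (Nat.ceil (max c 0))] with n hn
  calc c ≤ max c 0 := le_max_left _ _
  _ ≤ (Nat.ceil (max c 0) : ℝ) := Nat.le_ceil _
  _ ≤ (n : ℝ) := by exact_mod_cast hn

lemma ev_sqrt (c : ℝ) : ∀ᶠ n : ℕ in atTop, c ≤ Real.sqrt n := by
  filter_upwards [ev_nat (c ^ 2)] with n hn
  calc c ≤ |c| := le_abs_self c
  _ = Real.sqrt (c ^ 2) := (Real.sqrt_sq_eq_abs c).symm
  _ ≤ Real.sqrt n := Real.sqrt_le_sqrt hn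

lemma ev_sqrt_lin (c : ℝ) (hc : 0 < c) : ∀ᶠ n : ℕ in atTop, Real.sqrt n ≤ c * n := by
  filter_upwards [ev_sqrt c⁻¹] with n hn
  have h0 : (0:ℝ) ≤ n := Nat.cast_nonneg n
  have hs : Real.sqrt n * Real.sqrt n = n := Real.mul_self_sqrt h0
  have hsn : 0 ≤ Real.sqrt n := Real.sqrt_nonneg _
  have h5 : c⁻¹ * Real.sqrt n ≤ (n:ℝ) := by nlinarith
  have h6 : c * (c⁻¹ * Real.sqrt n) ≤ c * n := mul_le_mul_of_nonneg_left h5 hc.le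
  rw [← mul_assoc, mul_inv_cancel₀ hc.ne', one_mul] at h6
  exact h6

lemma ev_log_lin (c : ℝ) (hc : 0 < c) : ∀ᶠ n : ℕ in atTop, Real.log n ≤ c * n := by
  have h := tendsto_natCast_atTop_atTop.eventually (Real.isLittleO_log_id_atTop.def hc)
  filter_upwards [h, eventually_ge_atTop 1] with n hn hn1
  simp only [id] at hn
  have h1 : (1:ℝ) ≤ (n:ℝ) := by exact_mod_cast hn1
  have hlog : 0 ≤ Real.log n := Real.log_nonneg h1
  rw [Real.norm_eq_abs, Real.norm_eq_abs, abs_of_nonneg hlog, abs_of_nonneg (by linarith)] at hn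
  exact hn

lemma ev_combo (A B E F : ℝ) (hA : 0 < A) (hB : 0 ≤ B) (hE : 0 ≤ E) :
    ∀ᶠ n : ℕ in atTop, B * Real.log n + E * Real.sqrt n + F ≤ A * n := by
  have hδ : 0 < A / (4 * (B + E + 1)) := by positivity
  set δ := A / (4 * (B + E + 1)) with hδdef
  have hδB : B * δ + E * δ ≤ A / 2 := by
    have he : B * δ + E * δ = (B + E) * A / (4 * (B + E + 1)) := by rw [hδdef]; ring
    rw [he, div_le_div_iff₀ (by positivity) (by norm_num)]
    nlinarith
  filter_upwards [ev_log_lin δ hδ, ev_sqrt_lin δ hδ, ev_nat (2 * F / A), eventually_ge_atTop 1]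
    with n h1 h2 h3 h4
  have hF : F ≤ A / 2 * n := by
    rw [div_mul_eq_mul_div, le_div_iff₀ (by norm_num)]
    rw [div_le_iff₀ hA] at h3
    linarith
  have hb : B * Real.log n ≤ B * (δ * n) := mul_le_mul_of_nonneg_left h1 hB
  have he : E * Real.sqrt n ≤ E * (δ * n) := mul_le_mul_of_nonneg_left h2 hE
  have hn0 : (0:ℝ) ≤ n := Nat.cast_nonneg n
  nlinarith [mul_le_mul_of_nonneg_right hδB hn0]

lemma two_pow_lower (n : ℕ) : (Real.log 2 * n) ^ 2 ≤ (2:ℝ) ^ n := by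
  have h2 : (2:ℝ) ^ n = Real.exp (n * Real.log 2) := by
    rw [← Real.log_pow, Real.exp_log (by positivity)]
  set t := (n : ℝ) * Real.log 2 with ht
  have ht0 : 0 ≤ t := by positivity
  have h3 : Real.exp t = Real.exp (t/2) * Real.exp (t/2) := by
    rw [← Real.exp_add]; ring_nf
  have h4 : t ≤ Real.exp (t/2) := by
    have h5 : Real.exp (t/2) = Real.exp (t/4) * Real.exp (t/4) := by
      rw [← Real.exp_add]; ring_nf
    have h6 : t/4 + 1 ≤ Real.exp (t/4) := Real.add_one_le_exp (t/4)
    nlinarith [Real.exp_pos (t/4), sq_nonneg (t/4 - 1)]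
  rw [h2, h3]
  nlinarith [Real.exp_pos (t/2)]

lemma ev_pow_lin (c d : ℝ) (hd : 0 < d) : ∀ᶠ n : ℕ in atTop, c * n ≤ d * 2 ^ n := by
  have hl2 : (0:ℝ) < Real.log 2 := Real.log_pos (by norm_num)
  filter_upwards [ev_nat (c / (d * Real.log 2 ^ 2)), ev_nat 0] with n h1 h0
  have h2 := two_pow_lower n
  have h3 : c ≤ d * Real.log 2 ^ 2 * n := by
    rw [div_le_iff₀ (by positivity)] at h1
    linarith
  nlinarith [mul_le_mul_of_nonneg_left h2 hd.le, sq_nonneg ((n:ℝ) - 1)]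

end Aux

/-- Let `r_n` be an extreme space scale (`2^{m_n}/2^n → ε' ∈ (0,1]`) and `β > β_c = √(2 log 2)`,
`α = β_c/β`.  Then there are `0 < C < ∞` and `n₀` such that for all `n ≥ n₀` and all
`1 ≤ u ≤ b_n(1 - Φ(1/(β√n)))`, `g_n(u) = r_n⁻¹ G_n^{-1}(u/b_n) ≤ C u^{-1/α}`. -/
theorem gn_upper_bound_extreme (β : ℝ) (hβ : Real.sqrt (2 * Real.log 2) < β)
    (ε' : ℝ) (hε'0 : 0 < ε') (hε'1 : ε' ≤ 1)
    (r b : ℕ → ℝ)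
    (hr : Tendsto r atTop atTop)
    (hb_def : ∀ n : ℕ, b n * (1 - Phi (Real.log (r n) / (β * Real.sqrt n))) = 1)
    (hext : Tendsto (fun n : ℕ => (2 : ℝ) ^ (Real.log (b n) / Real.log 2) / 2 ^ n)
      atTop (nhds ε')) :
    ∃ C : ℝ, 0 < C ∧ ∃ n₀ : ℕ, ∀ n ≥ n₀, ∀ u : ℝ,
      1 ≤ u → u ≤ b n * (1 - Phi (1 / (β * Real.sqrt n))) →
      (r n)⁻¹ * Ginv β n (u / b n) ≤ C * u ^ (-(β / Real.sqrt (2 * Real.log 2))) := by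
  have hl2 : (0:ℝ) < Real.log 2 := Real.log_pos (by norm_num)
  have hlog2le1 : Real.log 2 ≤ 1 := by
    have := Real.log_le_sub_one_of_pos (show (0:ℝ) < 2 by norm_num)
    linarith
  set βc := Real.sqrt (2 * Real.log 2) with hβcdef
  have hβc0 : 0 < βc := Real.sqrt_pos.2 (by positivity)
  have hβ0 : 0 < β := lt_trans hβc0 hβ
  have hβcsq : βc ^ 2 = 2 * Real.log 2 := Real.sq_sqrt (by positivity)
  set q := β / βc with hqdef
  have hq0 : 0 < q := div_pos hβ0 hβc0
  have hK1 : (Real.sqrt (2 * Real.pi))⁻¹ ≤ 1 := by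
    rw [inv_le_one_iff₀]; right
    rw [show (1:ℝ) = Real.sqrt 1 by simp]
    apply Real.sqrt_le_sqrt
    linarith only [Real.pi_gt_three]
  have hK3 : (3:ℝ)⁻¹ ≤ (Real.sqrt (2 * Real.pi))⁻¹ := by
    apply inv_anti₀ (Real.sqrt_pos.2 (by positivity))
    rw [show (3:ℝ) = Real.sqrt 9 by
      rw [show (9:ℝ) = 3^2 by norm_num, Real.sqrt_sq (by norm_num)]]
    apply Real.sqrt_le_sqrt
    linarith only [Real.pi_lt_d2]
  refine ⟨Real.exp (200 * q), Real.exp_pos _, ?_⟩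
  have hbpos : ∀ n, 0 < b n := by
    intro n
    have h := hb_def n
    have ht := tail_pos (Real.log (r n) / (β * Real.sqrt n))
    nlinarith only [h, ht]
  have hext' : Tendsto (fun n : ℕ => b n / 2 ^ n) atTop (nhds ε') := by
    apply hext.congr
    intro n
    rw [Real.log_div_log, Real.rpow_logb (by norm_num) (by norm_num) (hbpos n)]
  have hbev : ∀ᶠ n : ℕ in atTop, ε'/2 * 2 ^ n ≤ b n ∧ b n ≤ 2 * 2 ^ n := by
    have hmem : Set.Ioo (ε'/2) 2 ∈ nhds ε' := Ioo_mem_nhds (by linarith) (by linarith)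
    filter_upwards [hext'.eventually hmem] with n hn
    obtain ⟨h1, h2⟩ := hn
    have hp : (0:ℝ) < 2 ^ n := by positivity
    rw [div_lt_iff₀ hp] at h2
    rw [lt_div_iff₀ hp] at h1
    exact ⟨h1.le, h2.le⟩
  have hev : ∀ᶠ n : ℕ in atTop,
      (1 ≤ r n) ∧ (ε'/2 * 2 ^ n ≤ b n ∧ b n ≤ 2 * 2 ^ n) ∧ (1 ≤ (n:ℝ)) ∧
      (Real.exp 2⁻¹ * n ≤ ε'/2 * 2 ^ n) ∧
      (2 * Real.sqrt n ≤ Real.exp (-(3/2)) * 3⁻¹ * n) ∧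
      (2 * Real.log n + (5*βc/3) * Real.sqrt n + (2 * Real.log (2/ε') + 1)
        ≤ (11/36 * βc^2) * n) ∧
      (3 ≤ βc * Real.sqrt n) := by
    have e1 := hr.eventually_ge_atTop 1
    have e3 := ev_nat 1
    have e5 := ev_pow_lin (Real.exp 2⁻¹) (ε'/2) (by positivity)
    have e6 := ev_sqrt_lin (Real.exp (-(3/2)) * 3⁻¹ / 2) (by positivity)
    have e7 := ev_combo (11/36 * βc^2) 2 (5*βc/3) (2 * Real.log (2/ε') + 1)
      (by nlinarith only [hβc0]) (by norm_num) (by linarith only [hβc0])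
    have e8 := ev_sqrt (3 / βc)
    filter_upwards [e1, hbev, e3, e5, e6, e7, e8] with n h1 h2 h3 h5 h6 h7 h8
    refine ⟨h1, h2, h3, h5, by linarith only [h6], h7, ?_⟩
    rw [div_le_iff₀ hβc0] at h8
    linarith only [h8]
  obtain ⟨n₀, hn₀⟩ := eventually_atTop.1 hev
  refine ⟨n₀, fun n hn u hu1 hu2 => ?_⟩
  obtain ⟨hr1, ⟨hb1, hb2⟩, hn1, h5, h6, h7, h8⟩ := hn₀ n hn
  have hn0 : (0:ℝ) < n := by linarith
  have hsn0 : 0 < Real.sqrt n := Real.sqrt_pos.2 hn0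
  have hss : Real.sqrt n * Real.sqrt n = (n:ℝ) := Real.mul_self_sqrt hn0.le
  have hBpos : 0 < βc * Real.sqrt n := by positivity
  have h2pow : (0:ℝ) < 2 ^ n := by positivity
  set s := β * Real.sqrt n with hsdef
  have hs0 : 0 < s := mul_pos hβ0 hsn0
  set a := Real.log (r n) / s with hadef
  have htaila : 1 - Phi a = (b n)⁻¹ := by
    have h := hb_def n
    rw [← hsdef, ← hadef, mul_comm] at h
    exact eq_inv_of_mul_eq_one_left h
  have hbn1 : 1 ≤ b n := by
    have h := hb_def n
    rw [← hsdef, ← hadef] at h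
    nlinarith only [tail_lt_one a, hbpos n, h]
  have hu0 : 0 < u := lt_of_lt_of_le one_pos hu1
  have hub : u ≤ b n := by
    refine le_trans hu2 ?_
    nlinarith only [Phi_pos (1/s), hbpos n]
  have hlogu0 : 0 ≤ Real.log u := Real.log_nonneg hu1
  have hlogbn : Real.log (b n) ≤ ((n:ℝ)+1) * Real.log 2 := by
    calc Real.log (b n) ≤ Real.log (2 * 2^n) :=
          Real.log_le_log (hbpos n) hb2
    _ = ((n:ℝ)+1) * Real.log 2 := by
        rw [Real.log_mul (by norm_num) (by positivity), Real.log_pow]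
        push_cast; ring
  have hlogu_up : Real.log u ≤ ((n:ℝ)+1) * Real.log 2 :=
    le_trans (Real.log_le_log hu0 hub) hlogbn
  set t := Real.log u / (βc * Real.sqrt n) with htdef
  have ht0 : 0 ≤ t := div_nonneg hlogu0 hBpos.le
  have htup : t ≤ βc / 2 * Real.sqrt n + 1 := by
    rw [htdef, div_le_iff₀ hBpos]
    have hrhs : (βc / 2 * Real.sqrt n + 1) * (βc * Real.sqrt n)
        = Real.log 2 * n + βc * Real.sqrt n := by
      linear_combination (Real.sqrt n * Real.sqrt n / 2) * hβcsq + Real.log 2 * hss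
    rw [hrhs]
    linarith only [hlogu_up, h8, hlog2le1]
  -- upper bound on a
  have hphiB : phi (βc * Real.sqrt n) = (Real.sqrt (2*Real.pi))⁻¹ * ((2:ℝ)^n)⁻¹ := by
    unfold phi
    congr 1
    have h1 : (βc * Real.sqrt n)^2 = 2 * Real.log 2 * n := by
      rw [mul_pow, hβcsq, Real.sq_sqrt hn0.le]
    rw [h1, show -(2*Real.log 2*(n:ℝ))/2 = -((n:ℝ) * Real.log 2) by ring, Real.exp_neg,
      ← Real.log_pow, Real.exp_log h2pow]
  have haup : a ≤ βc * Real.sqrt n := by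
    apply le_of_tail_le
    rw [htaila]
    have h1 := tail_le (βc * Real.sqrt n) hBpos
    rw [hphiB] at h1
    refine le_trans h1 ?_
    rw [inv_eq_one_div (b n), le_div_iff₀ (hbpos n), div_mul_eq_mul_div, div_le_one hBpos]
    have e1 : (Real.sqrt (2*Real.pi))⁻¹ * ((2:ℝ)^n)⁻¹ * b n ≤ ((2:ℝ)^n)⁻¹ * b n := by
      apply mul_le_mul_of_nonneg_right _ (hbpos n).le
      exact mul_le_of_le_one_left (by positivity) hK1
    have e2 : ((2:ℝ)^n)⁻¹ * b n ≤ ((2:ℝ)^n)⁻¹ * (2 * 2^n) :=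
      mul_le_mul_of_nonneg_left hb2 (by positivity)
    have e3 : ((2:ℝ)^n)⁻¹ * (2 * 2^n) = 2 := by field_simp
    linarith
  -- lower bound on a
  set w := b n / n with hwdef
  have hw1 : Real.exp 2⁻¹ ≤ w := by
    rw [hwdef, le_div_iff₀ hn0]
    calc Real.exp 2⁻¹ * n ≤ ε'/2 * 2^n := h5
    _ ≤ b n := hb1
  have hwpos : 0 < w := lt_of_lt_of_le (Real.exp_pos _) hw1
  have hlogw : 2⁻¹ ≤ Real.log w := by
    rw [← Real.log_exp 2⁻¹]
    exact Real.log_le_log (Real.exp_pos _) hw1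
  set c := Real.sqrt (2 * Real.log w) with hcdef
  have hc1 : 1 ≤ c := by
    rw [hcdef, show (1:ℝ) = Real.sqrt 1 by simp]
    apply Real.sqrt_le_sqrt; linarith
  have hcpos : 0 < c := lt_of_lt_of_le one_pos hc1
  have hcsq : c^2 = 2 * Real.log w := Real.sq_sqrt (by linarith)
  have hlw : Real.log w = Real.log (b n) - Real.log n := by
    rw [hwdef, Real.log_div (hbpos n).ne' hn0.ne']
  have hcup : c ≤ 2 * Real.sqrt n := by
    have hlogn0 : 0 ≤ Real.log n := Real.log_nonneg hn1
    have h2' : c^2 ≤ 4 * n := by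
      rw [hcsq, hlw]
      nlinarith only [hlogbn, hlogn0, hn1, hlog2le1,
        mul_le_mul_of_nonneg_right hlog2le1 (le_trans zero_le_one hn1)]
    calc c = Real.sqrt (c^2) := (Real.sqrt_sq hcpos.le).symm
    _ ≤ Real.sqrt (4*n) := Real.sqrt_le_sqrt h2'
    _ = 2 * Real.sqrt n := by
        rw [show (4:ℝ)*n = 2^2 * n by ring, Real.sqrt_mul (by positivity),
          Real.sqrt_sq (by norm_num)]
  have hphic : phi c = (Real.sqrt (2*Real.pi))⁻¹ * w⁻¹ := by
    unfold phi
    congr 1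
    rw [show -c^2/2 = -(Real.log w) by rw [hcsq]; ring, Real.exp_neg, Real.exp_log hwpos]
  have halow : c ≤ a := by
    apply le_of_tail_le
    rw [htaila]
    have h1 := tail_ge c hc1
    rw [hphic] at h1
    refine le_trans ?_ h1
    have hwinv : w⁻¹ = (n:ℝ) / b n := by rw [hwdef, inv_div]
    rw [hwinv, inv_eq_one_div, div_le_iff₀ (hbpos n)]
    have heq : Real.exp (-(3/2)) * ((Real.sqrt (2*Real.pi))⁻¹ * ((n:ℝ)/b n) / c) * b n
        = Real.exp (-(3/2)) * (Real.sqrt (2*Real.pi))⁻¹ * n / c := by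
      field_simp
    rw [heq, le_div_iff₀ hcpos, one_mul]
    calc c ≤ 2 * Real.sqrt n := hcup
    _ ≤ Real.exp (-(3/2)) * 3⁻¹ * n := h6
    _ ≤ Real.exp (-(3/2)) * (Real.sqrt (2*Real.pi))⁻¹ * n := by
        apply mul_le_mul_of_nonneg_right _ hn0.le
        exact mul_le_mul_of_nonneg_left hK3 (Real.exp_pos _).le
  have hA0 : (5*βc/6) * Real.sqrt n + 1 ≤ a := by
    refine le_trans ?_ halow
    rw [hcdef]
    rw [show ((5*βc/6) * Real.sqrt n + 1) = Real.sqrt (((5*βc/6) * Real.sqrt n + 1)^2) by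
      rw [Real.sqrt_sq (by positivity)]]
    apply Real.sqrt_le_sqrt
    have hA0sq : ((5*βc/6) * Real.sqrt n + 1)^2
        = 25/36 * (βc^2 * n) + 5*βc/3 * Real.sqrt n + 1 := by
      linear_combination (25/36 * βc^2) * Real.sq_sqrt hn0.le
    have hlbn_low : Real.log (ε'/2) + (n:ℝ) * Real.log 2 ≤ Real.log (b n) := by
      calc Real.log (ε'/2) + (n:ℝ) * Real.log 2 = Real.log (ε'/2 * 2^n) := by
            rw [Real.log_mul (by positivity) (by positivity), Real.log_pow]
      _ ≤ Real.log (b n) := Real.log_le_log (by positivity) hb1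
    have hle : Real.log (ε'/2) = - Real.log (2/ε') := by
      rw [← Real.log_inv, inv_div]
    have hll : (n:ℝ) * Real.log 2 = βc^2 * n / 2 := by rw [hβcsq]; ring
    rw [hA0sq, hlw]
    linarith only [h7, hlbn_low, hle, hll]
  have haβ : βc/2 * Real.sqrt n ≤ a := by
    nlinarith only [hA0, mul_nonneg hβc0.le hsn0.le]
  have ha1 : 1 ≤ a := by
    nlinarith only [hA0, mul_nonneg hβc0.le hsn0.le]
  have ha0 : 0 < a := lt_of_lt_of_le one_pos ha1
  set c' := 200 * q / s with hc'def
  have hc'0 : 0 < c' := by positivity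
  set x := a - t + c' with hxdef
  have hx3 : βc/3 * Real.sqrt n ≤ a - t := by linarith only [hA0, htup]
  have hx1 : 1 ≤ x := by
    rw [hxdef]; linarith only [h8, hx3, hc'0]
  have hxpos : 0 < x := lt_of_lt_of_le one_pos hx1
  have hx_ge_a3 : a / 3 ≤ x := by
    rw [hxdef]
    linarith only [haup, hx3, hc'0]
  have hat : a * t ≤ Real.log u := by
    rw [htdef]
    calc a * (Real.log u / (βc * Real.sqrt n))
        ≤ (βc * Real.sqrt n) * (Real.log u / (βc * Real.sqrt n)) :=
          mul_le_mul_of_nonneg_right haup (div_nonneg hlogu0 hBpos.le)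
    _ = Real.log u := by field_simp
  have hac' : 100 ≤ a * c' := by
    rw [hc'def, hsdef]
    have h1 : (βc/2 * Real.sqrt n) * (200*q/(β*Real.sqrt n))
        ≤ a * (200*q/(β*Real.sqrt n)) :=
      mul_le_mul_of_nonneg_right haβ (by positivity)
    have h2 : (βc/2 * Real.sqrt n) * (200*q/(β*Real.sqrt n)) = 100 := by
      rw [hqdef]; field_simp; ring
    linarith
  have hexp : Real.exp ((a^2 - x^2)/2) ≤ u * Real.exp (-(100:ℝ)) := by
    have h1 : (a^2 - x^2)/2 ≤ Real.log u - 100 := by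
      rw [hxdef]; nlinarith only [sq_nonneg (t - c'), hat, hac']
    calc Real.exp ((a^2-x^2)/2) ≤ Real.exp (Real.log u - 100) := Real.exp_le_exp.2 h1
    _ = u * Real.exp (-(100:ℝ)) := by
        rw [Real.exp_sub, Real.exp_log hu0, Real.exp_neg]; ring
  have hphix : phi x = phi a * Real.exp ((a^2 - x^2)/2) := by
    unfold phi
    rw [mul_assoc, ← Real.exp_add]
    congr 2
    ring
  have h100 : 3 * Real.exp (-(100:ℝ)) ≤ Real.exp (-(3/2)) := by
    rw [show (-(100:ℝ)) = -(3/2) + -(197/2) by norm_num, Real.exp_add]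
    have hp := Real.exp_pos (-(3/2:ℝ))
    have h197 : Real.exp (-(197/2:ℝ)) ≤ 3⁻¹ := by
      rw [Real.exp_neg]
      apply inv_anti₀ (by norm_num)
      linarith only [Real.add_one_le_exp (197/2:ℝ)]
    nlinarith only [h197, hp]
  have hpa := phi_pos a
  have hkey : 1 - Phi x ≤ u / b n := by
    have h1 := tail_le x hxpos
    have h2 := tail_ge a ha1
    have hmain : phi x / x ≤ u * (Real.exp (-(3/2)) * (phi a / a)) := by
      rw [div_le_iff₀ hxpos, hphix,
        show u * (Real.exp (-(3/2)) * (phi a / a)) * x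
          = u * Real.exp (-(3/2)) * phi a * x / a from by ring,
        le_div_iff₀ ha0]
      have hstep1 : phi a * Real.exp ((a^2-x^2)/2) ≤ phi a * (u * Real.exp (-(100:ℝ))) :=
        mul_le_mul_of_nonneg_left hexp hpa.le
      have hP : 0 ≤ phi a * (u * Real.exp (-(100:ℝ))) :=
        (mul_pos hpa (mul_pos hu0 (Real.exp_pos _))).le
      have w1 : phi a * Real.exp ((a^2-x^2)/2) * a ≤ phi a * (u * Real.exp (-(100:ℝ))) * a :=
        mul_le_mul_of_nonneg_right hstep1 ha0.le
      have ha3x : a ≤ 3 * x := by linarith only [hx_ge_a3, hxdef]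
      have w2 : phi a * (u * Real.exp (-(100:ℝ))) * a
          ≤ phi a * (u * Real.exp (-(100:ℝ))) * (3*x) :=
        mul_le_mul_of_nonneg_left ha3x hP
      have w3 : phi a * (u * Real.exp (-(100:ℝ))) * (3*x)
          = (3 * Real.exp (-(100:ℝ))) * (u * phi a * x) := by ring
      have w4 : (3 * Real.exp (-(100:ℝ))) * (u * phi a * x)
          ≤ Real.exp (-(3/2)) * (u * phi a * x) :=
        mul_le_mul_of_nonneg_right h100
          (mul_nonneg (mul_nonneg hu0.le hpa.le) hxpos.le)
      have w5 : Real.exp (-(3/2)) * (u * phi a * x) = u * Real.exp (-(3/2)) * phi a * x := by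
        ring
      calc phi a * Real.exp ((a^2-x^2)/2) * a
          ≤ phi a * (u * Real.exp (-(100:ℝ))) * a := w1
      _ ≤ phi a * (u * Real.exp (-(100:ℝ))) * (3*x) := w2
      _ = 3 * Real.exp (-(100:ℝ)) * (u * phi a * x) := w3
      _ ≤ Real.exp (-(3/2)) * (u * phi a * x) := w4
      _ = u * Real.exp (-(3/2)) * phi a * x := w5
    calc 1 - Phi x ≤ phi x / x := h1
    _ ≤ u * (Real.exp (-(3/2)) * (phi a / a)) := hmain
    _ ≤ u * (1 - Phi a) := mul_le_mul_of_nonneg_left h2 hu0.le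
    _ = u / b n := by rw [htaila, div_eq_mul_inv]
  -- conclusion
  have hrn0 : 0 < r n := lt_of_lt_of_le one_pos hr1
  have hupow : 0 < u ^ (-q) := Real.rpow_pos_of_pos hu0 _
  set v := Real.exp (200*q) * (r n * u ^ (-q)) with hvdef
  have hv0 : 0 < v := mul_pos (Real.exp_pos _) (mul_pos hrn0 hupow)
  have hlogv : Real.log v / s = x := by
    rw [hvdef, Real.log_mul (Real.exp_pos _).ne' (by positivity),
      Real.log_mul hrn0.ne' hupow.ne', Real.log_exp, Real.log_rpow hu0]
    rw [hxdef, hadef, htdef, hc'def, hsdef, hqdef]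
    field_simp
    ring
  have hmem : v ∈ {z : ℝ | 0 ≤ z ∧ 1 - Phi (Real.log z / (β * Real.sqrt n)) ≤ u / b n} := by
    constructor
    · exact hv0.le
    · rw [← hsdef, hlogv]; exact hkey
  have hbdd : BddBelow {z : ℝ | 0 ≤ z ∧ 1 - Phi (Real.log z / (β * Real.sqrt n)) ≤ u / b n} :=
    ⟨0, fun y hy => hy.1⟩
  have hGle : Ginv β n (u / b n) ≤ v := csInf_le hbdd hmem
  calc (r n)⁻¹ * Ginv β n (u / b n) ≤ (r n)⁻¹ * v :=
        mul_le_mul_of_nonneg_left hGle (inv_nonneg.2 hrn0.le)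
  _ = Real.exp (200*q) * u ^ (-q) := by
      rw [hvdef]; field_simp
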